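/- Suppose R_0 < 1 and τ ≥ 0. Then every complex root λ of the transcendental equation λ² + q_1·λ + q_2 + q_3·e^{−λτ} = 0, where q_1 = μ_h + μ_v, q_2 = μ_v·μ_h, q_3 = −μ_v·μ_h·R_0², has strictly negative real part. -/

import Mathlib

theorem dfe_char_roots_negative_real_part
    (μh μv R0 τ : ℝ)
    (hμh : 0 < μh) (hμv : 0 < μv) (hR0 : 0 ≤ R0) (hR0lt : R0 < 1) (hτ : 0 ≤ τ)
    (q1 q2 q3 : ℝ)
    (hq1 : q1 = μh + μv) (hq2 : q2 = μv * μh) (hq3 : q3 = -(μv * μh * R0 ^ 2)) :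
    ∀ lam : ℂ,
      lam ^ 2 + (q1 : ℂ) * lam + (q2 : ℂ) + (q3 : ℂ) * Complex.exp (-lam * (τ : ℂ)) = 0 →
      lam.re < 0 := by
  intro lam heq
  by_contra h
  push_neg at h
  have hfac : (lam + (μh : ℂ)) * (lam + (μv : ℂ))
      = -((q3 : ℂ) * Complex.exp (-lam * (τ : ℂ))) := by
    subst hq1 hq2
    push_cast at heq ⊢
    linear_combination heq
  have h1 : μh ≤ ‖lam + (μh : ℂ)‖ := by
    calc μh ≤ (lam + (μh : ℂ)).re := by simp; linarith
      _ ≤ |(lam + (μh : ℂ)).re| := le_abs_self _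
      _ ≤ ‖lam + (μh : ℂ)‖ := Complex.abs_re_le_norm _
  have h2 : μv ≤ ‖lam + (μv : ℂ)‖ := by
    calc μv ≤ (lam + (μv : ℂ)).re := by simp; linarith
      _ ≤ |(lam + (μv : ℂ)).re| := le_abs_self _
      _ ≤ ‖lam + (μv : ℂ)‖ := Complex.abs_re_le_norm _
  have hL : μh * μv ≤ ‖(lam + (μh : ℂ)) * (lam + (μv : ℂ))‖ := by
    rw [norm_mul]
    exact mul_le_mul h1 h2 hμv.le (norm_nonneg _)
  have hR : ‖-((q3 : ℂ) * Complex.exp (-lam * (τ : ℂ)))‖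
      = μv * μh * R0 ^ 2 * Real.exp (-lam.re * τ) := by
    rw [norm_neg, norm_mul, Complex.norm_exp]
    have : ‖(q3 : ℂ)‖ = μv * μh * R0 ^ 2 := by
      rw [Complex.norm_real, Real.norm_eq_abs, hq3, abs_neg, abs_of_nonneg (by positivity)]
    rw [this]
    congr 1
    simp
  have hexp : Real.exp (-lam.re * τ) ≤ 1 := by
    apply Real.exp_le_one_iff.mpr
    nlinarith
  have hR0sq : R0 ^ 2 < 1 := by nlinarith
  have : μh * μv ≤ μv * μh * R0 ^ 2 * Real.exp (-lam.re * τ) := by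
    rw [← hR, ← hfac]; exact hL
  have hc : (0:ℝ) ≤ μv * μh * R0 ^ 2 := by positivity
  nlinarith [mul_le_mul_of_nonneg_left hexp hc, mul_pos hμh hμv]
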